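/- Let f : ℝ^d → ℝ be (H0,H1)-smooth with H0, H1 > 0 and f* := inf f > −∞, and run GD with warm-up step size η_k = θ·min{1/H0, 1/(3H1·F_k)}, F_k := f(x^k) − f*, with θ = 1/(4√2 + 4), for N iterations. Let M be the smallest index k ∈ {0,…,N−1} with F_k < H0/(3H1), with M = N if no such index exists. Then: (i) if M = 0, min_{0≤k≤N−1}‖∇f(x^k)‖ ≤ √(2·H0·F_0/(θ·N)); (ii) if 1 ≤ M ≤ N−1, min_{0≤k≤N−1}‖∇f(x^k)‖ ≤ min{ √(6·H1·F_0·(Σ_{k=0}^{M−1}F_k)/(θ·M²)) , √(2·H0·F_0/(θ·(N−M))) }; (iii) if M = N, min_{0≤k≤N−1}‖∇f(x^k)‖ ≤ √(6·H1·F_0·(Σ_{k=0}^{N−1}F_k)/(θ·N²)). -/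

import Mathlib

open scoped RealInnerProductSpace

noncomputable section

lemma quad_upper {E : Type*} [NormedAddCommGroup E] [InnerProductSpace ℝ E] [CompleteSpace E]
    (f : E → ℝ) (f' : E → E) (hgrad : ∀ y, HasGradientAt f (f' y) y)
    (x y : E) (L : ℝ) (hL : 0 ≤ L)
    (hlip : ∀ t ∈ Set.Icc (0:ℝ) 1, ‖f' (x + t • (y - x)) - f' x‖ ≤ L * (t * ‖y - x‖)) :
    f y ≤ f x + ⟪f' x, y - x⟫ + L / 2 * ‖y - x‖ ^ 2 := by
  set δ := y - x with hδ
  have hc : ∀ t : ℝ, HasDerivAt (fun t : ℝ => x + t • δ) δ t := by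
    intro t
    simpa using ((hasDerivAt_id t).smul_const δ).const_add x
  have hφ : ∀ t : ℝ, HasDerivAt (fun t : ℝ => f (x + t • δ)) ⟪f' (x + t • δ), δ⟫ t := by
    intro t
    have := ((hgrad (x + t • δ)).hasFDerivAt.comp_hasDerivAt t (hc t))
    exact this
  set h : ℝ → ℝ := fun t => f x + t * ⟪f' x, δ⟫ + L * ‖δ‖ ^ 2 / 2 * t ^ 2 - f (x + t • δ)
    with hh
  have hd : ∀ t : ℝ, HasDerivAt h (⟪f' x, δ⟫ + L * ‖δ‖ ^ 2 * t - ⟪f' (x + t • δ), δ⟫) t := by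
    intro t
    have h1 : HasDerivAt (fun t : ℝ => f x + t * ⟪f' x, δ⟫ + L * ‖δ‖ ^ 2 / 2 * t ^ 2)
        (⟪f' x, δ⟫ + L * ‖δ‖ ^ 2 * t) t := by
      have := (((hasDerivAt_id t).mul_const (⟪f' x, δ⟫)).const_add (f x)).add
        (((hasDerivAt_pow 2 t)).const_mul (L * ‖δ‖ ^ 2 / 2))
      convert this using 1
      · rfl
      · rfl
      · rfl
      · rw [show (2:ℕ) - 1 = 1 from rfl]
        push_cast
        ring
    exact h1.sub (hφ t)
  have hmono : MonotoneOn h (Set.Icc (0:ℝ) 1) := by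
    apply monotoneOn_of_deriv_nonneg (convex_Icc 0 1)
    · exact fun t _ => (hd t).continuousAt.continuousWithinAt
    · exact fun t _ => ((hd t).differentiableAt).differentiableWithinAt
    · intro t ht
      rw [interior_Icc] at ht
      rw [(hd t).deriv]
      have hb : ⟪f' (x + t • δ), δ⟫ - ⟪f' x, δ⟫ ≤ L * ‖δ‖ ^ 2 * t := by
        have h1 : ⟪f' (x + t • δ) - f' x, δ⟫ ≤ ‖f' (x + t • δ) - f' x‖ * ‖δ‖ :=
          real_inner_le_norm _ _
        have h2 : ‖f' (x + t • δ) - f' x‖ ≤ L * (t * ‖δ‖) :=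
          hlip t ⟨le_of_lt ht.1, le_of_lt ht.2⟩
        have h3 : ‖f' (x + t • δ) - f' x‖ * ‖δ‖ ≤ L * (t * ‖δ‖) * ‖δ‖ :=
          mul_le_mul_of_nonneg_right h2 (norm_nonneg _)
        rw [inner_sub_left] at h1
        nlinarith [h1, h3]
      linarith
  have h01 : h 0 ≤ h 1 := hmono (by norm_num) (by norm_num) zero_le_one
  have h0 : h 0 = 0 := by simp [hh]
  have h1 : h 1 = f x + ⟪f' x, δ⟫ + L * ‖δ‖ ^ 2 / 2 - f y := by
    simp [hh, hδ]
  rw [h0, h1] at h01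
  linarith

lemma grad_bound {E : Type*} [NormedAddCommGroup E] [InnerProductSpace ℝ E] [CompleteSpace E]
    (f : E → ℝ) (f' : E → E) (H0 H1 : ℝ) (hH0 : 0 < H0) (hH1 : 0 < H1)
    (hgrad : ∀ y, HasGradientAt f (f' y) y) (hbdd : BddBelow (Set.range f))
    (hsmooth : ∀ y z : E, Real.sqrt H1 * ‖z - y‖ ≤ 1 →
      ‖f' z - f' y‖ ≤ (H0 + H1 * (f y - ⨅ w, f w)) * ‖z - y‖)
    (p : E) :
    ‖f' p‖ ≤ Real.sqrt (2 * (H0 + H1 * (f p - ⨅ w, f w)) * (f p - ⨅ w, f w))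
      + 2 * Real.sqrt H1 * (f p - ⨅ w, f w) := by
  set fs := ⨅ w, f w with hfs
  have hF0 : 0 ≤ f p - fs := sub_nonneg.mpr (ciInf_le hbdd p)
  set F := f p - fs with hF
  set L := H0 + H1 * F with hLdef
  have hL : 0 < L := by positivity
  have hsH1 : 0 < Real.sqrt H1 := Real.sqrt_pos.mpr hH1
  by_cases hg : f' p = 0
  · rw [hg]; simp; positivity
  have hgn : 0 < ‖f' p‖ := norm_pos_iff.mpr hg
  set g := f' p with hgdef
  set s := min (1/L) (1/(Real.sqrt H1 * ‖g‖)) with hs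
  have hspos : 0 < s := lt_min (by positivity) (by positivity)
  have hsL : s * L ≤ 1 := by
    have := min_le_left (1/L) (1/(Real.sqrt H1 * ‖g‖))
    rw [← hs] at this
    calc s * L ≤ (1/L) * L := mul_le_mul_of_nonneg_right this hL.le
    _ = 1 := by field_simp
  have hs2 : Real.sqrt H1 * (s * ‖g‖) ≤ 1 := by
    have h1 : s ≤ 1/(Real.sqrt H1 * ‖g‖) := min_le_right _ _
    calc Real.sqrt H1 * (s * ‖g‖) ≤ Real.sqrt H1 * ((1/(Real.sqrt H1 * ‖g‖)) * ‖g‖) := by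
          apply mul_le_mul_of_nonneg_left _ hsH1.le
          exact mul_le_mul_of_nonneg_right h1 hgn.le
      _ = 1 := by field_simp
  set y := p - s • g with hy
  have hyp : y - p = -(s • g) := by rw [hy]; abel
  have hnyp : ‖y - p‖ = s * ‖g‖ := by
    rw [hyp, norm_neg, norm_smul, Real.norm_eq_abs, abs_of_pos hspos]
  have hlip : ∀ t ∈ Set.Icc (0:ℝ) 1, ‖f' (p + t • (y - p)) - f' p‖ ≤ L * (t * ‖y - p‖) := by
    intro t ht
    set z := p + t • (y - p) with hz
    have hzp : z - p = t • (y - p) := by rw [hz]; abel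
    have hnzp : ‖z - p‖ = t * ‖y - p‖ := by
      rw [hzp, norm_smul, Real.norm_eq_abs, abs_of_nonneg ht.1]
    have hcond : Real.sqrt H1 * ‖z - p‖ ≤ 1 := by
      rw [hnzp, hnyp]
      calc Real.sqrt H1 * (t * (s * ‖g‖)) ≤ Real.sqrt H1 * (1 * (s * ‖g‖)) := by
            apply mul_le_mul_of_nonneg_left _ hsH1.le
            apply mul_le_mul_of_nonneg_right ht.2
            positivity
        _ = Real.sqrt H1 * (s * ‖g‖) := by ring
        _ ≤ 1 := hs2
    have := hsmooth p z hcond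
    rw [hnzp] at this
    exact this
  have hquad := quad_upper f f' hgrad p y L hL.le hlip
  have hinner : ⟪f' p, y - p⟫ = -(s * ‖g‖^2) := by
    rw [hyp, inner_neg_right, real_inner_smul_right, real_inner_self_eq_norm_sq]
  have hfy : fs ≤ f y := ciInf_le hbdd y
  rw [hinner, hnyp] at hquad
  have hkey : s * ‖g‖^2 ≤ 2 * F := by nlinarith [sq_nonneg ‖g‖, hspos.le]
  rcases le_total (1/L) (1/(Real.sqrt H1 * ‖g‖)) with hc | hc
  · have hse : s = 1/L := min_eq_left hc
    rw [hse] at hkey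
    have h2 : ‖g‖^2 ≤ 2 * L * F := by
      have := mul_le_mul_of_nonneg_left hkey hL.le
      calc ‖g‖^2 = L * (1/L * ‖g‖^2) := by field_simp
        _ ≤ L * (2 * F) := mul_le_mul_of_nonneg_left hkey hL.le
        _ = 2 * L * F := by ring
    have h3 : ‖g‖ ≤ Real.sqrt (2 * L * F) := by
      rw [← Real.sqrt_sq hgn.le]
      exact Real.sqrt_le_sqrt h2
    have h4 : 0 ≤ 2 * Real.sqrt H1 * F := by positivity
    linarith
  · have hse : s = 1/(Real.sqrt H1 * ‖g‖) := min_eq_right hc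
    rw [hse] at hkey
    have h2 : ‖g‖ ≤ 2 * Real.sqrt H1 * F := by
      have h0 : (1/(Real.sqrt H1 * ‖g‖)) * ‖g‖^2 = ‖g‖ / Real.sqrt H1 := by
        field_simp
      rw [h0] at hkey
      calc ‖g‖ = (‖g‖ / Real.sqrt H1) * Real.sqrt H1 := by field_simp
        _ ≤ (2 * F) * Real.sqrt H1 := mul_le_mul_of_nonneg_right hkey hsH1.le
        _ = 2 * Real.sqrt H1 * F := by ring
    have h3 : 0 ≤ Real.sqrt (2 * L * F) := Real.sqrt_nonneg _
    linarith

set_option maxHeartbeats 2000000 in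
theorem gd_warmup_nonconvex_rate
    {d : ℕ}
    (f : EuclideanSpace ℝ (Fin d) → ℝ)
    (f' : EuclideanSpace ℝ (Fin d) → EuclideanSpace ℝ (Fin d))
    (H0 H1 θ : ℝ) (N M : ℕ)
    (x : ℕ → EuclideanSpace ℝ (Fin d))
    (hH0 : 0 < H0) (hH1 : 0 < H1)
    (hθ : θ = 1 / (4 * Real.sqrt 2 + 4))
    (hgrad : ∀ y, HasGradientAt f (f' y) y)
    (hbdd : BddBelow (Set.range f))
    (hsmooth : ∀ y z : EuclideanSpace ℝ (Fin d),
      Real.sqrt H1 * ‖z - y‖ ≤ 1 →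
      ‖f' z - f' y‖ ≤ (H0 + H1 * (f y - ⨅ w, f w)) * ‖z - y‖)
    -- GD with warm-up step size
    (hupdate : ∀ k, x (k + 1) =
      x k - (θ / max H0 (3 * H1 * (f (x k) - ⨅ w, f w))) • f' (x k))
    (hN : 0 < N)
    -- `M` is the smallest index `k < N` with `F_k < H0/(3H1)`, else `M = N`
    (hMle : M ≤ N)
    (hMbefore : ∀ k < M, H0 / (3 * H1) ≤ f (x k) - ⨅ w, f w)
    (hMat : M < N → f (x M) - ⨅ w, f w < H0 / (3 * H1)) :
    -- (i) `M = 0`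
    (M = 0 → ∃ k < N, ‖f' (x k)‖ ≤
      Real.sqrt (2 * H0 * (f (x 0) - ⨅ w, f w) / (θ * N))) ∧
    -- (ii) `1 ≤ M ≤ N - 1`
    (1 ≤ M → M < N → ∃ k < N, ‖f' (x k)‖ ≤
      min (Real.sqrt (6 * H1 * (f (x 0) - ⨅ w, f w) *
              (∑ j ∈ Finset.range M, (f (x j) - ⨅ w, f w)) / (θ * M ^ 2)))
          (Real.sqrt (2 * H0 * (f (x 0) - ⨅ w, f w) / (θ * ((N : ℝ) - M))))) ∧
    -- (iii) `M = N`
    (M = N → ∃ k < N, ‖f' (x k)‖ ≤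
      Real.sqrt (6 * H1 * (f (x 0) - ⨅ w, f w) *
        (∑ j ∈ Finset.range N, (f (x j) - ⨅ w, f w)) / (θ * N ^ 2))) := by
  set fs := ⨅ w, f w with hfs
  have hFnn : ∀ k, 0 ≤ f (x k) - fs := by
    intro k
    rw [hfs]
    exact sub_nonneg.mpr (ciInf_le hbdd (x k))
  clear_value fs
  have hsH1 : 0 < Real.sqrt H1 := Real.sqrt_pos.mpr hH1
  -- facts about θ
  set s2 := Real.sqrt 2 with hs2def
  have hs2sq : s2 ^ 2 = 2 := Real.sq_sqrt (by norm_num)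
  have hs2ge : 1 ≤ s2 := by
    rw [hs2def, show (1:ℝ) = Real.sqrt 1 by simp]
    exact Real.sqrt_le_sqrt (by norm_num)
  have hθpos : 0 < θ := by rw [hθ]; positivity
  have hθhalf : θ * (2 * s2 + 2) = 1 / 2 := by
    rw [hθ]
    have : 4 * s2 + 4 ≠ 0 := by positivity
    field_simp
    ring
  have hθsmall : θ * (4 / 3) ≤ 1 := by
    have h8 : (8:ℝ) ≤ 4 * s2 + 4 := by nlinarith
    have : θ ≤ 1 / 8 := by
      rw [hθ]
      apply div_le_div_of_nonneg_left (by norm_num) (by norm_num) h8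
    linarith
  -- the key one-step descent inequality
  have hkey : ∀ k, f (x (k+1)) - fs ≤ (f (x k) - fs) -
      θ / max H0 (3 * H1 * (f (x k) - fs)) / 2 * ‖f' (x k)‖^2 := by
    intro k
    have hFk : 0 ≤ f (x k) - fs := hFnn k
    set Fk := f (x k) - fs with hFkdef
    set mx := max H0 (3 * H1 * Fk) with hmxdef
    set L := H0 + H1 * Fk with hLdef
    set G := ‖f' (x k)‖ with hGdef
    set η := θ / mx with hηdef
    have hH0mx : H0 ≤ mx := by rw [hmxdef]; exact le_max_left _ _
    have h3H1mx : 3 * H1 * Fk ≤ mx := by rw [hmxdef]; exact le_max_right _ _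
    have hG0 : 0 ≤ G := by rw [hGdef]; exact norm_nonneg _
    have hsmoothI : ∀ y z : EuclideanSpace ℝ (Fin d),
        Real.sqrt H1 * ‖z - y‖ ≤ 1 →
        ‖f' z - f' y‖ ≤ (H0 + H1 * (f y - ⨅ w, f w)) * ‖z - y‖ := by
      rw [← hfs]; exact hsmooth
    have gb0 := grad_bound f f' H0 H1 hH0 hH1 hgrad hbdd hsmoothI (x k)
    rw [← hfs] at gb0
    have gb : G ≤ Real.sqrt (2 * L * Fk) + 2 * Real.sqrt H1 * Fk := by
      rw [hGdef, hLdef, hFkdef]; exact gb0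
    have hstep0 : x (k+1) - x k = -(η • f' (x k)) := by
      rw [hupdate k, ← hFkdef, ← hmxdef, ← hηdef]
      abel
    clear_value Fk mx L G η
    have hmx : 0 < mx := lt_of_lt_of_le hH0 hH0mx
    have hL : 0 < L := by rw [hLdef]; positivity
    have hLmx : L ≤ 4 / 3 * mx := by rw [hLdef]; linarith
    have hFmx : Fk ≤ mx / (3 * H1) := by
      rw [le_div_iff₀ (by positivity)]
      linarith
    have hηpos : 0 < η := by rw [hηdef]; positivity
    have hs1 : Real.sqrt (2 * L * Fk) ≤ (2 * s2 / 3) * (mx / Real.sqrt H1) := by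
      have hBnn : 0 ≤ (2 * s2 / 3) * (mx / Real.sqrt H1) := by positivity
      have hH1sq : Real.sqrt H1 ^ 2 = H1 := Real.sq_sqrt hH1.le
      have hsq : 2 * L * Fk ≤ ((2 * s2 / 3) * (mx / Real.sqrt H1))^2 := by
        have hexp : ((2 * s2 / 3) * (mx / Real.sqrt H1))^2
            = (s2 ^ 2) * (4 / 9) * (mx ^ 2 / (Real.sqrt H1 ^ 2)) := by ring
        rw [hexp, hs2sq, hH1sq]
        have h1 : 2 * L * Fk ≤ 2 * (4/3*mx) * (mx/(3*H1)) := by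
          apply mul_le_mul
          · linarith
          · exact hFmx
          · exact hFk
          · positivity
        have h2 : 2 * (4/3*mx) * (mx/(3*H1)) = 2 * (4/9) * (mx^2/H1) := by
          field_simp; ring
        linarith
      calc Real.sqrt (2 * L * Fk) ≤ Real.sqrt (((2 * s2 / 3) * (mx / Real.sqrt H1))^2) :=
            Real.sqrt_le_sqrt hsq
        _ = (2 * s2 / 3) * (mx / Real.sqrt H1) := Real.sqrt_sq hBnn
    have hs2b : 2 * Real.sqrt H1 * Fk ≤ (2/3) * (mx / Real.sqrt H1) := by
      rw [show (2/3) * (mx / Real.sqrt H1) = (2/3*mx) / Real.sqrt H1 by ring,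
        le_div_iff₀ hsH1]
      have hmul : Real.sqrt H1 * Real.sqrt H1 = H1 := Real.mul_self_sqrt hH1.le
      calc 2 * Real.sqrt H1 * Fk * Real.sqrt H1
          = 2 * (Real.sqrt H1 * Real.sqrt H1) * Fk := by ring
        _ = 2 * H1 * Fk := by rw [hmul]
        _ ≤ 2/3 * mx := by linarith
    have hgmx : G ≤ ((2 * s2 + 2) / 3) * (mx / Real.sqrt H1) := by
      have heq : (2 * s2 / 3) * (mx / Real.sqrt H1) + (2/3) * (mx / Real.sqrt H1)
          = ((2 * s2 + 2) / 3) * (mx / Real.sqrt H1) := by ring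
      linarith
    -- step length is small
    have hsmall : Real.sqrt H1 * (η * G) ≤ 1 := by
      have h1 : η * G ≤ (θ / mx) * (((2 * s2 + 2) / 3) * (mx / Real.sqrt H1)) := by
        rw [hηdef]
        exact mul_le_mul_of_nonneg_left hgmx (by positivity)
      have h2 : (θ / mx) * (((2 * s2 + 2) / 3) * (mx / Real.sqrt H1))
          = (θ * (2 * s2 + 2)) / (3 * Real.sqrt H1) := by
        field_simp
      rw [h2, hθhalf] at h1
      have h3 : Real.sqrt H1 * (η * G) ≤ Real.sqrt H1 * ((1/2) / (3 * Real.sqrt H1)) :=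
        mul_le_mul_of_nonneg_left h1 hsH1.le
      have h4 : Real.sqrt H1 * ((1/2) / (3 * Real.sqrt H1)) = 1/6 := by
        field_simp
        ring
      linarith
    have hnstep : ‖x (k+1) - x k‖ = η * G := by
      rw [hstep0, norm_neg, norm_smul, Real.norm_eq_abs, abs_of_pos hηpos, hGdef]
    -- Lipschitz bound along the segment
    have hlip : ∀ t ∈ Set.Icc (0:ℝ) 1,
        ‖f' (x k + t • (x (k+1) - x k)) - f' (x k)‖ ≤ L * (t * ‖x (k+1) - x k‖) := by
      intro t ht
      set z := x k + t • (x (k+1) - x k) with hz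
      have hzp : z - x k = t • (x (k+1) - x k) := by rw [hz]; abel
      have hnzp : ‖z - x k‖ = t * ‖x (k+1) - x k‖ := by
        rw [hzp, norm_smul, Real.norm_eq_abs, abs_of_nonneg ht.1]
      have hcond : Real.sqrt H1 * ‖z - x k‖ ≤ 1 := by
        rw [hnzp, hnstep]
        have h1 : t * (η * G) ≤ η * G := by
          have := mul_nonneg (sub_nonneg.mpr ht.2) (mul_nonneg hηpos.le hG0)
          nlinarith [this]
        have := mul_le_mul_of_nonneg_left h1 hsH1.le
        linarith
      have hsm := hsmooth (x k) z hcond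
      rw [← hFkdef, ← hLdef, hnzp] at hsm
      exact hsm
    have hq := quad_upper f f' hgrad (x k) (x (k+1)) L hL.le hlip
    have hinner : ⟪f' (x k), x (k+1) - x k⟫ = -(η * G^2) := by
      rw [hstep0, inner_neg_right, real_inner_smul_right, real_inner_self_eq_norm_sq,
        hGdef]
    rw [hinner, hnstep] at hq
    -- η * L ≤ 1
    have hηL : η * L ≤ 1 := by
      have h1 : η * L ≤ (θ/mx) * (4/3*mx) := by
        rw [hηdef]
        exact mul_le_mul_of_nonneg_left hLmx (by positivity)
      have h2 : (θ/mx) * (4/3*mx) = θ * (4/3) := by field_simp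
      rw [h2] at h1
      linarith
    have hfinal : f (x (k+1)) ≤ f (x k) - η / 2 * G^2 := by
      nlinarith [mul_le_mul_of_nonneg_right hηL (mul_nonneg hηpos.le (sq_nonneg G))]
    rw [hFkdef]
    linarith
  -- monotonicity
  have hmono : ∀ k, f (x (k+1)) - fs ≤ f (x k) - fs := by
    intro k
    have h := hkey k
    have h2 : 0 ≤ θ / max H0 (3 * H1 * (f (x k) - fs)) / 2 * ‖f' (x k)‖^2 := by
      have : 0 < max H0 (3 * H1 * (f (x k) - fs)) := lt_of_lt_of_le hH0 (le_max_left _ _)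
      positivity
    linarith
  have hanti : Antitone (fun k => f (x k) - fs) := antitone_nat_of_succ_le hmono
  -- warm phase per-step inequality
  have hwarm : ∀ k < M, θ * ‖f' (x k)‖^2 ≤
      6 * H1 * (f (x k) - fs) * ((f (x k) - fs) - (f (x (k+1)) - fs)) := by
    intro k hk
    have hw := hMbefore k hk
    have hFkpos : 0 < f (x k) - fs := lt_of_lt_of_le (by positivity) hw
    have hH03 : H0 ≤ 3 * H1 * (f (x k) - fs) := by
      rw [div_le_iff₀ (by positivity)] at hw
      linarith
    have h := hkey k
    rw [max_eq_right hH03] at h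
    have h2 : θ / (3 * H1 * (f (x k) - fs)) / 2 * ‖f' (x k)‖^2 ≤
        (f (x k) - fs) - (f (x (k+1)) - fs) := by linarith
    have h3 := mul_le_mul_of_nonneg_left h2 (show (0:ℝ) ≤ 6 * H1 * (f (x k) - fs) by positivity)
    have h4 : 6 * H1 * (f (x k) - fs) * (θ / (3 * H1 * (f (x k) - fs)) / 2 * ‖f' (x k)‖^2)
        = θ * ‖f' (x k)‖^2 := by
      field_simp
      ring
    rw [h4] at h3
    exact h3
  -- cool phase per-step inequality
  have hcool : ∀ k, 3 * H1 * (f (x k) - fs) ≤ H0 →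
      θ / H0 / 2 * ‖f' (x k)‖^2 ≤ (f (x k) - fs) - (f (x (k+1)) - fs) := by
    intro k hk
    have h := hkey k
    rw [max_eq_left hk] at h
    linarith
  -- telescoping
  have htel : ∀ a b : ℕ, a ≤ b →
      ∑ k ∈ Finset.Ico a b, ((f (x k) - fs) - (f (x (k+1)) - fs))
        = (f (x a) - fs) - (f (x b) - fs) := by
    intro a b hab
    induction b, hab using Nat.le_induction with
    | base => simp
    | succ n hn ih =>
      rw [Finset.sum_Ico_succ_top hn, ih]
      ring
  -- cool-phase averaging
  have hA : ∀ a : ℕ, a < N → (∀ k, a ≤ k → k < N → 3 * H1 * (f (x k) - fs) ≤ H0) →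
      ∃ k, a ≤ k ∧ k < N ∧ ‖f' (x k)‖^2 ≤
        2 * H0 * (f (x 0) - fs) / (θ * ((N:ℝ) - a)) := by
    intro a haN hcond
    by_contra hcon
    push_neg at hcon
    have hNa : 0 < (N:ℝ) - a := by
      have : (a:ℝ) < N := by exact_mod_cast haN
      linarith
    have hne : (Finset.Ico a N).Nonempty := ⟨a, Finset.mem_Ico.mpr ⟨le_refl a, haN⟩⟩
    have hub : ∑ k ∈ Finset.Ico a N, (θ / H0 / 2 * ‖f' (x k)‖^2) ≤ f (x 0) - fs := by
      calc ∑ k ∈ Finset.Ico a N, (θ / H0 / 2 * ‖f' (x k)‖^2)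
          ≤ ∑ k ∈ Finset.Ico a N, ((f (x k) - fs) - (f (x (k+1)) - fs)) := by
            apply Finset.sum_le_sum
            intro k hk
            rw [Finset.mem_Ico] at hk
            exact hcool k (hcond k hk.1 hk.2)
        _ = (f (x a) - fs) - (f (x N) - fs) := htel a N haN.le
        _ ≤ f (x 0) - fs := by
            have h1 := hFnn N
            have h2 : f (x a) - fs ≤ f (x 0) - fs := hanti (Nat.zero_le a)
            linarith
    have hlb : ((N:ℝ) - a) * (θ / H0 / 2 * (2 * H0 * (f (x 0) - fs) / (θ * ((N:ℝ) - a))))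
        < ∑ k ∈ Finset.Ico a N, (θ / H0 / 2 * ‖f' (x k)‖^2) := by
      have hsum := Finset.sum_lt_sum_of_nonempty hne
        (f := fun _ => θ / H0 / 2 * (2 * H0 * (f (x 0) - fs) / (θ * ((N:ℝ) - a))))
        (g := fun k => θ / H0 / 2 * ‖f' (x k)‖^2)
        (by
          intro k hk
          rw [Finset.mem_Ico] at hk
          exact mul_lt_mul_of_pos_left (hcon k hk.1 hk.2) (by positivity))
      rw [Finset.sum_const, Nat.card_Ico, nsmul_eq_mul] at hsum
      have hcast : ((N - a : ℕ) : ℝ) = (N:ℝ) - a := by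
        rw [Nat.cast_sub haN.le]
      rw [hcast] at hsum
      exact hsum
    have hval : ((N:ℝ) - a) * (θ / H0 / 2 * (2 * H0 * (f (x 0) - fs) / (θ * ((N:ℝ) - a))))
        = f (x 0) - fs := by
      field_simp
    rw [hval] at hlb
    linarith
  -- warm-phase AM-HM bound
  have hB : 1 ≤ M → ∃ k < M, ‖f' (x k)‖^2 ≤
      6 * H1 * (f (x 0) - fs) * (∑ j ∈ Finset.range M, (f (x j) - fs)) / (θ * (M:ℝ)^2) := by
    intro hM1
    have hFpos : ∀ k ∈ Finset.range M, 0 < f (x k) - fs := by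
      intro k hk
      rw [Finset.mem_range] at hk
      exact lt_of_lt_of_le (by positivity) (hMbefore k hk)
    have hrne : (Finset.range M).Nonempty := ⟨0, Finset.mem_range.mpr hM1⟩
    have hSpos : 0 < ∑ j ∈ Finset.range M, (f (x j) - fs) :=
      Finset.sum_pos hFpos hrne
    have hTpos : 0 < ∑ j ∈ Finset.range M, (1 / (f (x j) - fs)) :=
      Finset.sum_pos (fun i hi => by have := hFpos i hi; positivity) hrne
    obtain ⟨k0, hk0mem, hk0min⟩ := Finset.exists_min_image (Finset.range M)
      (fun k => ‖f' (x k)‖^2) hrne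
    rw [Finset.mem_range] at hk0mem
    refine ⟨k0, hk0mem, ?_⟩
    have hm0 : 0 ≤ ‖f' (x k0)‖^2 := sq_nonneg _
    -- θ * m0 * T ≤ 6 H1 F0
    have step1 : θ * (‖f' (x k0)‖^2 * ∑ j ∈ Finset.range M, (1 / (f (x j) - fs)))
        ≤ 6 * H1 * (f (x 0) - fs) := by
      have hper : ∀ k ∈ Finset.range M,
          θ * (‖f' (x k0)‖^2 * (1 / (f (x k) - fs)))
            ≤ 6 * H1 * ((f (x k) - fs) - (f (x (k+1)) - fs)) := by
        intro k hk
        have hFk := hFpos k hk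
        rw [Finset.mem_range] at hk
        have h1 : θ * ‖f' (x k0)‖^2 ≤ θ * ‖f' (x k)‖^2 :=
          mul_le_mul_of_nonneg_left (hk0min k (Finset.mem_range.mpr hk)) hθpos.le
        have h2 := hwarm k hk
        have h3 : θ * ‖f' (x k0)‖^2 ≤
            6 * H1 * (f (x k) - fs) * ((f (x k) - fs) - (f (x (k+1)) - fs)) := by linarith
        have h4 := mul_le_mul_of_nonneg_right h3 (le_of_lt (show (0:ℝ) < 1 / (f (x k) - fs) by positivity))
        have h5 : 6 * H1 * (f (x k) - fs) * ((f (x k) - fs) - (f (x (k+1)) - fs))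
            * (1 / (f (x k) - fs)) = 6 * H1 * ((f (x k) - fs) - (f (x (k+1)) - fs)) := by
          field_simp
        rw [h5] at h4
        calc θ * (‖f' (x k0)‖^2 * (1 / (f (x k) - fs)))
            = θ * ‖f' (x k0)‖^2 * (1 / (f (x k) - fs)) := by ring
          _ ≤ _ := h4
      calc θ * (‖f' (x k0)‖^2 * ∑ j ∈ Finset.range M, (1 / (f (x j) - fs)))
          = ∑ k ∈ Finset.range M, θ * (‖f' (x k0)‖^2 * (1 / (f (x k) - fs))) := by
            rw [Finset.mul_sum, Finset.mul_sum]
        _ ≤ ∑ k ∈ Finset.range M, 6 * H1 * ((f (x k) - fs) - (f (x (k+1)) - fs)) :=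
            Finset.sum_le_sum hper
        _ = 6 * H1 * ((f (x 0) - fs) - (f (x M) - fs)) := by
            rw [← Finset.mul_sum, Finset.range_eq_Ico, htel 0 M (Nat.zero_le M)]
        _ ≤ 6 * H1 * (f (x 0) - fs) := by
            have := hFnn M
            nlinarith
    -- Cauchy-Schwarz: M^2 ≤ T * S
    have step2 : (M:ℝ)^2 ≤ (∑ j ∈ Finset.range M, (1 / (f (x j) - fs)))
        * (∑ j ∈ Finset.range M, (f (x j) - fs)) := by
      have := Finset.sum_sq_le_sum_mul_sum_of_sq_eq_mul (Finset.range M)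
        (r := fun _ => (1:ℝ)) (f := fun j => 1 / (f (x j) - fs)) (g := fun j => f (x j) - fs)
        (fun i hi => by have := hFpos i hi; positivity)
        (fun i hi => (hFpos i hi).le)
        (fun i hi => by
          have := hFpos i hi
          field_simp)
      simpa using this
    have hfinal : ‖f' (x k0)‖^2 * (θ * (M:ℝ)^2) ≤
        6 * H1 * (f (x 0) - fs) * (∑ j ∈ Finset.range M, (f (x j) - fs)) := by
      calc ‖f' (x k0)‖^2 * (θ * (M:ℝ)^2)
          = (θ * ‖f' (x k0)‖^2) * (M:ℝ)^2 := by ring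
        _ ≤ (θ * ‖f' (x k0)‖^2) * ((∑ j ∈ Finset.range M, (1 / (f (x j) - fs)))
              * (∑ j ∈ Finset.range M, (f (x j) - fs))) :=
            mul_le_mul_of_nonneg_left step2 (by positivity)
        _ = (θ * (‖f' (x k0)‖^2 * ∑ j ∈ Finset.range M, (1 / (f (x j) - fs))))
              * (∑ j ∈ Finset.range M, (f (x j) - fs)) := by ring
        _ ≤ 6 * H1 * (f (x 0) - fs) * (∑ j ∈ Finset.range M, (f (x j) - fs)) :=
            mul_le_mul_of_nonneg_right step1 hSpos.le
    rw [le_div_iff₀ (by positivity : (0:ℝ) < θ * (M:ℝ)^2)]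
    linarith
  -- conversion from squared bound to norm bound
  have normle : ∀ (k : ℕ) (c : ℝ), ‖f' (x k)‖^2 ≤ c → ‖f' (x k)‖ ≤ Real.sqrt c := by
    intro k c h
    rw [← Real.sqrt_sq (norm_nonneg (f' (x k)))]
    exact Real.sqrt_le_sqrt h
  refine ⟨?_, ?_, ?_⟩
  · -- (i) M = 0
    intro hM0
    subst hM0
    have hmat := hMat hN
    have hcoolall : ∀ k, 0 ≤ k → k < N → 3 * H1 * (f (x k) - fs) ≤ H0 := by
      intro k _ _
      have h1 : f (x k) - fs ≤ f (x 0) - fs := hanti (Nat.zero_le k)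
      have h2 : 3 * H1 * (H0 / (3 * H1)) = H0 := by field_simp
      have h3 := mul_le_mul_of_nonneg_left h1 (by positivity : (0:ℝ) ≤ 3 * H1)
      have h4 := mul_lt_mul_of_pos_left hmat (by positivity : (0:ℝ) < 3 * H1)
      linarith
    obtain ⟨k, _, hkN, hk⟩ := hA 0 hN hcoolall
    refine ⟨k, hkN, ?_⟩
    have hcast : ((N:ℝ) - (0:ℕ)) = (N:ℝ) := by norm_num
    rw [hcast] at hk
    exact normle k _ hk
  · -- (ii) 1 ≤ M < N
    intro hM1 hMN
    obtain ⟨k1, hk1M, hb1⟩ := hB hM1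
    have hmat := hMat hMN
    have hcooltail : ∀ k, M ≤ k → k < N → 3 * H1 * (f (x k) - fs) ≤ H0 := by
      intro k hMk _
      have h1 : f (x k) - fs ≤ f (x M) - fs := hanti hMk
      have h3 := mul_le_mul_of_nonneg_left h1 (by positivity : (0:ℝ) ≤ 3 * H1)
      have h4 := mul_lt_mul_of_pos_left hmat (by positivity : (0:ℝ) < 3 * H1)
      have h2 : 3 * H1 * (H0 / (3 * H1)) = H0 := by field_simp
      linarith
    obtain ⟨k2, hk2a, hk2N, hb2⟩ := hA M hMN hcooltail
    have hA1 : ‖f' (x k1)‖ ≤ Real.sqrt (6 * H1 * (f (x 0) - fs) *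
        (∑ j ∈ Finset.range M, (f (x j) - fs)) / (θ * (M:ℝ)^2)) := normle k1 _ hb1
    have hB2 : ‖f' (x k2)‖ ≤ Real.sqrt (2 * H0 * (f (x 0) - fs) / (θ * ((N:ℝ) - M))) :=
      normle k2 _ hb2
    by_cases hcmp : ‖f' (x k1)‖ ≤ ‖f' (x k2)‖
    · refine ⟨k1, lt_of_lt_of_le hk1M hMle, le_min hA1 (le_trans hcmp hB2)⟩
    · push_neg at hcmp
      exact ⟨k2, hk2N, le_min (le_trans hcmp.le hA1) hB2⟩
  · -- (iii) M = N
    intro hMN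
    subst hMN
    obtain ⟨k, hkM, hk⟩ := hB hN
    exact ⟨k, hkM, normle k _ hk⟩

end
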